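/- Define A : ℝ^N → ℝ^N by A(η) = a(|η|)η for η ≠ 0 and A(0) = 0. Then for every η ∈ ℝ^N with η ≠ 0, A is differentiable at η and its derivative DA(η) satisfies ‖DA(η)‖ · |η| ≤ (g⁺ − 1) · g(|η|), where ‖DA(η)‖ denotes the operator norm of DA(η). -/

import Mathlib

section Aux

variable {E : Type*} [NormedAddCommGroup E] [InnerProductSpace ℝ E]

/-- Derivative of the norm at a nonzero point of a real inner product space. -/
theorem aux_hasFDerivAt_norm {x : E} (hx : x ≠ 0) :
    HasFDerivAt (fun y : E => ‖y‖) (‖x‖⁻¹ • innerSL ℝ x) x := by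
  have h1 : HasFDerivAt (fun y : E => ‖y‖ ^ 2) (2 • innerSL ℝ x) x :=
    (hasStrictFDerivAt_norm_sq x).hasFDerivAt
  have hx2 : (‖x‖ : ℝ) ^ 2 ≠ 0 := pow_ne_zero 2 (norm_ne_zero_iff.mpr hx)
  have h2 := h1.sqrt hx2
  have hxpos : (0 : ℝ) < ‖x‖ := norm_pos_iff.mpr hx
  have hfun : (fun y : E => Real.sqrt (‖y‖ ^ 2)) = fun y : E => ‖y‖ := by
    funext y; exact Real.sqrt_sq (norm_nonneg y)
  rw [hfun] at h2
  convert h2 using 1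
  rw [Real.sqrt_sq (norm_nonneg x)]
  ext v
  simp only [ContinuousLinearMap.coe_smul', Pi.smul_apply, ContinuousLinearMap.smul_apply,
    smul_eq_mul, one_div]
  simp only [two_smul]
  ring

end Aux

/-- For `A(η) = a(|η|)η` (with `A(0) = 0`), at every `η ≠ 0` the map `A` is
differentiable and `‖DA(η)‖ |η| ≤ (g⁺ − 1) g(|η|)`, where `g⁺ − 1 = sup g'(t)t/g(t)`. -/
theorem stmt_17 (N : ℕ) (hN : 1 ≤ N) (a g : ℝ → ℝ) (gp : ℝ)
    (ha_diff : ∀ t : ℝ, 0 < t → DifferentiableAt ℝ a t)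
    (ha_cont_deriv : ContinuousOn (deriv a) (Set.Ioi (0 : ℝ)))
    (ha_pos : ∀ t : ℝ, 0 < t → 0 < a t)
    (ha_mono : ∀ s t : ℝ, 0 < s → s ≤ t → a s ≤ a t)
    (hg_def : ∀ t : ℝ, g t = a |t| * t)
    (hg_odd : ∀ t : ℝ, g (-t) = - g t)
    (hg_mono : StrictMono g) (hg_surj : Function.Surjective g) (hg_cont : Continuous g)
    (hbound : ∀ t : ℝ, 0 < t → deriv g t * t / g t ≤ gp - 1)
    (A : EuclideanSpace ℝ (Fin N) → EuclideanSpace ℝ (Fin N))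
    (hA0 : A 0 = 0)
    (hA : ∀ ζ : EuclideanSpace ℝ (Fin N), ζ ≠ 0 → A ζ = a ‖ζ‖ • ζ) :
    ∀ η : EuclideanSpace ℝ (Fin N), η ≠ 0 →
      ∃ D : EuclideanSpace ℝ (Fin N) →L[ℝ] EuclideanSpace ℝ (Fin N),
        HasFDerivAt A D η ∧ ‖D‖ * ‖η‖ ≤ (gp - 1) * g ‖η‖ := by
  intro η hη
  set t : ℝ := ‖η‖ with ht_def
  have ht : (0 : ℝ) < t := norm_pos_iff.mpr hη
  -- derivative of a at t is nonnegative
  have hderiv_a : HasDerivAt a (deriv a t) t := (ha_diff t ht).hasDerivAt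
  have ha'_nonneg : 0 ≤ deriv a t := by
    have htend : Filter.Tendsto (slope a t) (nhdsWithin t {t}ᶜ) (nhds (deriv a t)) :=
      hasDerivAt_iff_tendsto_slope.mp hderiv_a
    have htend' : Filter.Tendsto (slope a t) (nhdsWithin t (Set.Ioi t)) (nhds (deriv a t)) :=
      htend.mono_left (nhdsWithin_mono t (fun s hs => ne_of_gt hs))
    refine le_of_tendsto_of_tendsto tendsto_const_nhds htend' ?_
    filter_upwards [self_mem_nhdsWithin] with s hs
    have hst : t < s := hs
    have : a t ≤ a s := ha_mono t s ht hst.le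
    have hpos : 0 < s - t := by linarith
    simp only [slope_def_field]
    rw [div_eq_mul_inv]
    exact mul_nonneg (by linarith) (inv_nonneg.mpr hpos.le)
  -- deriv g t = deriv a t * t + a t
  have hg_eq : g =ᶠ[nhds t] fun s => a s * s := by
    filter_upwards [Ioi_mem_nhds ht] with s hs
    rw [hg_def s, abs_of_pos hs]
  have hderiv_g : deriv g t = deriv a t * t + a t := by
    rw [hg_eq.deriv_eq]
    have := (hderiv_a.mul (hasDerivAt_id t)).deriv
    show deriv (a * id) t = _
    simpa using this
  have hg_pos : 0 < g t := by
    rw [hg_def t, abs_of_pos ht]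
    exact mul_pos (ha_pos t ht) ht
  -- the key scalar inequality
  have hkey : (deriv a t * t + a t) * t ≤ (gp - 1) * g t := by
    have := hbound t ht
    rw [div_le_iff₀ hg_pos] at this
    rw [hderiv_g] at this
    linarith [this]
  -- construct the derivative
  have hnorm : HasFDerivAt (fun y : EuclideanSpace ℝ (Fin N) => ‖y‖) (t⁻¹ • innerSL ℝ η) η :=
    aux_hasFDerivAt_norm hη
  have hcomp : HasFDerivAt (fun y : EuclideanSpace ℝ (Fin N) => a ‖y‖) (deriv a t • (t⁻¹ • innerSL ℝ η)) η :=
    hderiv_a.comp_hasFDerivAt η hnorm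
  set c' : EuclideanSpace ℝ (Fin N) →L[ℝ] ℝ := deriv a t • (t⁻¹ • innerSL ℝ η) with hc'
  set D : EuclideanSpace ℝ (Fin N) →L[ℝ] EuclideanSpace ℝ (Fin N) := a t • ContinuousLinearMap.id ℝ (EuclideanSpace ℝ (Fin N)) + c'.smulRight η with hD
  have hF : HasFDerivAt (fun y : EuclideanSpace ℝ (Fin N) => a ‖y‖ • y) D η :=
    hcomp.smul (hasFDerivAt_id η)
  have hAF : A =ᶠ[nhds η] fun y : EuclideanSpace ℝ (Fin N) => a ‖y‖ • y := by
    filter_upwards [IsOpen.mem_nhds isOpen_compl_singleton hη] with y hy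
    exact hA y hy
  have hAderiv : HasFDerivAt A D η := hF.congr_of_eventuallyEq hAF
  refine ⟨D, hAderiv, ?_⟩
  -- bound the operator norm
  have hDnorm : ‖D‖ ≤ a t + deriv a t * t := by
    refine ContinuousLinearMap.opNorm_le_bound D ?_ ?_
    · have := ha_pos t ht
      nlinarith [mul_nonneg ha'_nonneg ht.le]
    · intro v
      have hDv : D v = a t • v + (deriv a t * (t⁻¹ * inner ℝ η v)) • η := by
        simp [hD, hc', mul_assoc]
      rw [hDv]
      calc ‖a t • v + (deriv a t * (t⁻¹ * inner ℝ η v)) • η‖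
          ≤ ‖a t • v‖ + ‖(deriv a t * (t⁻¹ * inner ℝ η v)) • η‖ := norm_add_le _ _
        _ ≤ a t * ‖v‖ + deriv a t * t * ‖v‖ := by
            have h1 : ‖a t • v‖ = a t * ‖v‖ := by
              rw [norm_smul, Real.norm_eq_abs, abs_of_pos (ha_pos t ht)]
            have h2 : |(inner ℝ η v : ℝ)| ≤ t * ‖v‖ := by
              rw [ht_def]; exact abs_real_inner_le_norm η v
            have h3 : ‖(deriv a t * (t⁻¹ * inner ℝ η v)) • η‖ ≤ deriv a t * t * ‖v‖ := by
              rw [norm_smul, Real.norm_eq_abs, abs_mul, abs_mul,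
                abs_of_nonneg ha'_nonneg, abs_of_nonneg (inv_nonneg.mpr ht.le), ← ht_def]
              have he : deriv a t * (t⁻¹ * |(inner ℝ η v : ℝ)|) * t
                  = deriv a t * |(inner ℝ η v : ℝ)| := by field_simp
              rw [he]
              calc deriv a t * |(inner ℝ η v : ℝ)| ≤ deriv a t * (t * ‖v‖) :=
                    mul_le_mul_of_nonneg_left h2 ha'_nonneg
                _ = deriv a t * t * ‖v‖ := by ring
            linarith [h1, h3]
        _ = (a t + deriv a t * t) * ‖v‖ := by ring
  calc ‖D‖ * t ≤ (a t + deriv a t * t) * t := by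
        have ht' := ht.le
        exact mul_le_mul_of_nonneg_right hDnorm ht'
    _ = (deriv a t * t + a t) * t := by ring
    _ ≤ (gp - 1) * g t := hkey
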